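/- arXiv:1401.0401 — 2 statements merged into one kernel-verified Lean document; each statement's English description precedes it below -/
import Mathlib

section
/- For a hyperbolic triangle with vertex angles θ_1, θ_2, θ_3 and opposite side lengths l_1, l_2, l_3, where the sides are the inversive-distance circle packing lengths cosh l_k = η_{ij} sinh r_i sinh r_j + cosh r_i cosh r_j (with fixed η's), treating θ_1, θ_2 as functions of u_1 = log tanh(r_1/2), u_2 = log tanh(r_2/2) via the hyperbolic cosine law, the mixed partial derivatives agree: ∂θ_1/∂u_2 = ∂θ_2/∂u_1, and both equal [(cosh l_1 cosh l_3 − cosh l_2) cosh r_1 + (cosh l_2 cosh l_3 − cosh l_1) cosh r_2 − sinh²l_3 cosh r_3] / (√N · sinh²l_3), where N = 1 + 2 cosh l_1 cosh l_2 cosh l_3 − cosh²l_1 − cosh²l_2 − cosh²l_3. -/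
open Real

noncomputable def SSf (u : ℝ) : ℝ := 2 * Real.exp u / (1 - Real.exp u ^ 2)
noncomputable def CCf (u : ℝ) : ℝ := (1 + Real.exp u ^ 2) / (1 - Real.exp u ^ 2)

lemma closed_form {x u : ℝ} (hx : 0 < x) (h : Real.tanh (x / 2) = Real.exp u) :
    Real.sinh x = SSf u ∧ Real.cosh x = CCf u := by
  have hc : Real.cosh (x / 2) ≠ 0 := (Real.cosh_pos _).ne'
  have hp : Real.cosh (x / 2) ^ 2 - Real.sinh (x / 2) ^ 2 = 1 := Real.cosh_sq_sub_sinh_sq _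
  have hden : 1 - Real.exp u ^ 2 ≠ 0 := by
    have h1 : Real.exp u ^ 2 < 1 := by
      rw [← h, Real.tanh_eq_sinh_div_cosh, div_pow, div_lt_one (by positivity)]
      nlinarith [Real.cosh_pos (x / 2)]
    nlinarith
  have hx2 : x = 2 * (x / 2) := by ring
  rw [← h, Real.tanh_eq_sinh_div_cosh] at hden
  constructor
  · rw [SSf, hx2, Real.sinh_two_mul, ← h, Real.tanh_eq_sinh_div_cosh]
    field_simp
    nlinarith [hp]
  · rw [CCf, hx2, Real.cosh_two_mul, ← h, Real.tanh_eq_sinh_div_cosh]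
    field_simp
    exact hp

lemma hasDerivAt_CCf {u : ℝ} (hu : u < 0) : HasDerivAt CCf (SSf u ^ 2) u := by
  have he : Real.exp u < 1 := Real.exp_lt_one_iff.2 hu
  have hden : (0:ℝ) < 1 - Real.exp u ^ 2 := by nlinarith [Real.exp_pos u]
  have h1 : HasDerivAt (fun v => 1 + Real.exp v ^ 2) (2 * Real.exp u * Real.exp u) u := by
    simpa using ((Real.hasDerivAt_exp u).pow 2).const_add 1
  have h2 : HasDerivAt (fun v => 1 - Real.exp v ^ 2) (-(2 * Real.exp u * Real.exp u)) u := by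
    simpa using ((Real.hasDerivAt_exp u).pow 2).const_sub 1
  have := h1.div h2 hden.ne'
  refine this.congr_deriv (Eq.symm ?_)
  rw [SSf]
  field_simp
  ring

lemma hasDerivAt_SSf {u : ℝ} (hu : u < 0) : HasDerivAt SSf (SSf u * CCf u) u := by
  have he : Real.exp u < 1 := Real.exp_lt_one_iff.2 hu
  have hden : (0:ℝ) < 1 - Real.exp u ^ 2 := by nlinarith [Real.exp_pos u]
  have h1 : HasDerivAt (fun v => 2 * Real.exp v) (2 * Real.exp u) u := by
    simpa using (Real.hasDerivAt_exp u).const_mul 2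
  have h2 : HasDerivAt (fun v => 1 - Real.exp v ^ 2) (-(2 * Real.exp u * Real.exp u)) u := by
    simpa using ((Real.hasDerivAt_exp u).pow 2).const_sub 1
  have := h1.div h2 hden.ne'
  refine this.congr_deriv (Eq.symm ?_)
  rw [SSf, CCf]
  field_simp
  ring
lemma master {f g : ℝ → ℝ} {u f' g' b sb : ℝ}
    (hf : HasDerivAt f f' u) (hg : HasDerivAt g g' u)
    (hsb : 0 < sb) (hb : sb ^ 2 = b ^ 2 - 1)
    (hC : 1 < g u)
    (htri : |b * g u - f u| < sb * Real.sqrt (g u ^ 2 - 1)) :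
    HasDerivAt (fun s => Real.arccos ((b * g s - f s) / (sb * Real.sqrt (g s ^ 2 - 1))))
      ((f' * (g u ^ 2 - 1) - g' * (f u * g u - b)) /
        (Real.sqrt (1 + 2 * f u * b * g u - f u ^ 2 - b ^ 2 - g u ^ 2) * (g u ^ 2 - 1))) u := by
  have h1 : (0:ℝ) < g u ^ 2 - 1 := by nlinarith
  have hs : 0 < Real.sqrt (g u ^ 2 - 1) := Real.sqrt_pos.2 h1
  have hq : Real.sqrt (g u ^ 2 - 1) ^ 2 = g u ^ 2 - 1 := Real.sq_sqrt h1.le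
  have habs := abs_lt.1 htri
  have hN : (0:ℝ) < 1 + 2 * f u * b * g u - f u ^ 2 - b ^ 2 - g u ^ 2 := by
    have h3 : (b * g u - f u) ^ 2 < (sb * Real.sqrt (g u ^ 2 - 1)) ^ 2 := by
      nlinarith [habs.1, habs.2, mul_pos hsb hs]
    nlinarith [hq, hb]
  have hNs : 0 < Real.sqrt (1 + 2 * f u * b * g u - f u ^ 2 - b ^ 2 - g u ^ 2) :=
    Real.sqrt_pos.2 hN
  have hNq := Real.sq_sqrt hN.le
  -- derivative of inner quotient
  have hgs : HasDerivAt (fun s => Real.sqrt (g s ^ 2 - 1))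
      (g u * g' / Real.sqrt (g u ^ 2 - 1)) u := by
    have h0 : HasDerivAt (fun s => g s ^ 2 - 1) (2 * g u * g') u := by
      simpa [mul_comm, mul_assoc] using (hg.pow 2).sub_const 1
    have h2 := (Real.hasDerivAt_sqrt h1.ne').comp u h0
    refine h2.congr_deriv (Eq.symm ?_)
    field_simp
  have hdenne : sb * Real.sqrt (g u ^ 2 - 1) ≠ 0 := by positivity
  have hnum : HasDerivAt (fun s => b * g s - f s) (b * g' - f') u := (hg.const_mul b).sub hf
  have hden : HasDerivAt (fun s => sb * Real.sqrt (g s ^ 2 - 1))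
      (sb * (g u * g' / Real.sqrt (g u ^ 2 - 1))) u := hgs.const_mul sb
  have hh := hnum.div hden hdenne
  rw [Pi.div_def] at hh
  have hval : |(b * g u - f u) / (sb * Real.sqrt (g u ^ 2 - 1))| < 1 := by
    rw [abs_div, abs_of_pos (mul_pos hsb hs), div_lt_one (mul_pos hsb hs)]
    exact htri
  have hvl := abs_lt.1 hval
  have harc := (Real.hasDerivAt_arccos (by linarith : _ ≠ (-1:ℝ)) (by linarith : _ ≠ (1:ℝ))).comp u hh
  simp only [Function.comp_def] at harc
  have hsq1 : 1 - ((b * g u - f u) / (sb * Real.sqrt (g u ^ 2 - 1))) ^ 2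
      = (1 + 2 * f u * b * g u - f u ^ 2 - b ^ 2 - g u ^ 2) / (sb * Real.sqrt (g u ^ 2 - 1)) ^ 2 := by
    rw [div_pow, eq_div_iff (by positivity)]
    field_simp
    nlinarith [hq, hb]
  have h2s : Real.sqrt (1 - ((b * g u - f u) / (sb * Real.sqrt (g u ^ 2 - 1))) ^ 2)
      = Real.sqrt (1 + 2 * f u * b * g u - f u ^ 2 - b ^ 2 - g u ^ 2)
        / (sb * Real.sqrt (g u ^ 2 - 1)) := by
    rw [hsq1, Real.sqrt_div hN.le, Real.sqrt_sq (by positivity)]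
  rw [h2s] at harc
  set w := Real.sqrt (g u ^ 2 - 1) with hw
  set q := Real.sqrt (1 + 2 * f u * b * g u - f u ^ 2 - b ^ 2 - g u ^ 2) with hqd
  refine harc.congr_deriv (Eq.symm ?_)
  field_simp
  linear_combination (g u * g' * (b * g u - f u)) * hq

lemma sinh_eq_sqrt {x : ℝ} (hx : 0 < x) :
    Real.sinh x = Real.sqrt (Real.cosh x ^ 2 - 1) := by
  rw [← Real.sinh_sq, Real.sqrt_sq (Real.sinh_pos_iff.2 hx).le]

theorem stmt_15 (η12 η23 η31 r3 : ℝ) (hr3 : 0 < r3)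
    (R : ℝ → ℝ) (hR : ∀ u : ℝ, u < 0 → 0 < R u ∧ Real.tanh (R u / 2) = Real.exp u)
    (L1 : ℝ → ℝ)
    (hL1 : ∀ u2, 0 < L1 u2 ∧
      Real.cosh (L1 u2) = η23 * Real.sinh (R u2) * Real.sinh r3 + Real.cosh (R u2) * Real.cosh r3)
    (L2 : ℝ → ℝ)
    (hL2 : ∀ u1, 0 < L2 u1 ∧
      Real.cosh (L2 u1) = η31 * Real.sinh r3 * Real.sinh (R u1) + Real.cosh r3 * Real.cosh (R u1))
    (L3 : ℝ → ℝ → ℝ)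
    (hL3 : ∀ u1 u2, 0 < L3 u1 u2 ∧
      Real.cosh (L3 u1 u2) = η12 * Real.sinh (R u1) * Real.sinh (R u2) + Real.cosh (R u1) * Real.cosh (R u2))
    (θ1 θ2 : ℝ → ℝ → ℝ)
    (hθ1 : ∀ u1 u2, θ1 u1 u2 = Real.arccos
      ((Real.cosh (L2 u1) * Real.cosh (L3 u1 u2) - Real.cosh (L1 u2)) /
        (Real.sinh (L2 u1) * Real.sinh (L3 u1 u2))))
    (hθ2 : ∀ u1 u2, θ2 u1 u2 = Real.arccos
      ((Real.cosh (L1 u2) * Real.cosh (L3 u1 u2) - Real.cosh (L2 u1)) /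
        (Real.sinh (L1 u2) * Real.sinh (L3 u1 u2))))
    (u1 u2 : ℝ) (hu1 : u1 < 0) (hu2 : u2 < 0)
    (htri : L1 u2 < L2 u1 + L3 u1 u2 ∧ L2 u1 < L1 u2 + L3 u1 u2 ∧ L3 u1 u2 < L1 u2 + L2 u1) :
    deriv (fun s => θ1 u1 s) u2 = deriv (fun s => θ2 s u2) u1 ∧
    deriv (fun s => θ1 u1 s) u2 =
      ((Real.cosh (L1 u2) * Real.cosh (L3 u1 u2) - Real.cosh (L2 u1)) * Real.cosh (R u1)
        + (Real.cosh (L2 u1) * Real.cosh (L3 u1 u2) - Real.cosh (L1 u2)) * Real.cosh (R u2)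
        - Real.sinh (L3 u1 u2) ^ 2 * Real.cosh r3) /
      (Real.sqrt (1 + 2 * Real.cosh (L1 u2) * Real.cosh (L2 u1) * Real.cosh (L3 u1 u2)
          - Real.cosh (L1 u2) ^ 2 - Real.cosh (L2 u1) ^ 2 - Real.cosh (L3 u1 u2) ^ 2)
        * Real.sinh (L3 u1 u2) ^ 2) := by
  obtain ⟨hx1, ht1⟩ := hR u1 hu1
  obtain ⟨hx2, ht2⟩ := hR u2 hu2
  obtain ⟨hS1, hC1⟩ := closed_form hx1 ht1
  obtain ⟨hS2, hC2⟩ := closed_form hx2 ht2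
  have hl1 := (hL1 u2).1
  have hl2 := (hL2 u1).1
  have hl3 := (hL3 u1 u2).1
  have t1 := htri.1
  have t2 := htri.2.1
  have t3 := htri.2.2
  have hsl1 : 0 < Real.sinh (L1 u2) := Real.sinh_pos_iff.2 hl1
  have hsl2 : 0 < Real.sinh (L2 u1) := Real.sinh_pos_iff.2 hl2
  have hsl3 : 0 < Real.sinh (L3 u1 u2) := Real.sinh_pos_iff.2 hl3
  -- strict triangle bounds
  have habs1 : |Real.cosh (L2 u1) * Real.cosh (L3 u1 u2) - Real.cosh (L1 u2)|
      < Real.sinh (L2 u1) * Real.sinh (L3 u1 u2) := by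
    have hA : Real.cosh (L1 u2) < Real.cosh (L2 u1 + L3 u1 u2) :=
      Real.cosh_lt_cosh.2 (by
        rw [abs_of_pos hl1, abs_of_pos (by linarith : (0:ℝ) < L2 u1 + L3 u1 u2)]; exact t1)
    have hB : Real.cosh (L2 u1 - L3 u1 u2) < Real.cosh (L1 u2) :=
      Real.cosh_lt_cosh.2 (by
        rw [abs_of_pos hl1]; exact abs_lt.2 ⟨by linarith, by linarith⟩)
    rw [Real.cosh_add] at hA
    rw [Real.cosh_sub] at hB
    exact abs_lt.2 ⟨by linarith, by linarith⟩
  have habs2 : |Real.cosh (L1 u2) * Real.cosh (L3 u1 u2) - Real.cosh (L2 u1)|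
      < Real.sinh (L1 u2) * Real.sinh (L3 u1 u2) := by
    have hA : Real.cosh (L2 u1) < Real.cosh (L1 u2 + L3 u1 u2) :=
      Real.cosh_lt_cosh.2 (by
        rw [abs_of_pos hl2, abs_of_pos (by linarith : (0:ℝ) < L1 u2 + L3 u1 u2)]; exact t2)
    have hB : Real.cosh (L1 u2 - L3 u1 u2) < Real.cosh (L2 u1) :=
      Real.cosh_lt_cosh.2 (by
        rw [abs_of_pos hl2]; exact abs_lt.2 ⟨by linarith, by linarith⟩)
    rw [Real.cosh_add] at hA
    rw [Real.cosh_sub] at hB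
    exact abs_lt.2 ⟨by linarith, by linarith⟩
  -- derivative of θ1 in second variable
  have hf1 : HasDerivAt (fun s => η23 * SSf s * Real.sinh r3 + CCf s * Real.cosh r3)
      (η23 * (SSf u2 * CCf u2) * Real.sinh r3 + SSf u2 ^ 2 * Real.cosh r3) u2 :=
    (((hasDerivAt_SSf hu2).const_mul η23).mul_const _).add ((hasDerivAt_CCf hu2).mul_const _)
  have hg1 : HasDerivAt (fun s => η12 * Real.sinh (R u1) * SSf s + Real.cosh (R u1) * CCf s)
      (η12 * Real.sinh (R u1) * (SSf u2 * CCf u2) + Real.cosh (R u1) * SSf u2 ^ 2) u2 :=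
    ((hasDerivAt_SSf hu2).const_mul _).add ((hasDerivAt_CCf hu2).const_mul _)
  have hClt1 : 1 < η12 * Real.sinh (R u1) * SSf u2 + Real.cosh (R u1) * CCf u2 := by
    rw [← hS2, ← hC2, ← (hL3 u1 u2).2]
    exact Real.one_lt_cosh.2 hl3.ne'
  have h1tri : |Real.cosh (L2 u1) * (η12 * Real.sinh (R u1) * SSf u2 + Real.cosh (R u1) * CCf u2)
      - (η23 * SSf u2 * Real.sinh r3 + CCf u2 * Real.cosh r3)|
      < Real.sinh (L2 u1) *
        Real.sqrt ((η12 * Real.sinh (R u1) * SSf u2 + Real.cosh (R u1) * CCf u2) ^ 2 - 1) := by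
    rw [← hS2, ← hC2, ← (hL1 u2).2, ← (hL3 u1 u2).2, ← sinh_eq_sqrt hl3]
    exact habs1
  have hm1 := master hf1 hg1 hsl2 (Real.sinh_sq (L2 u1)) hClt1 h1tri
  have heq1 : (fun s => θ1 u1 s) =ᶠ[nhds u2] (fun s => Real.arccos
      ((Real.cosh (L2 u1) * (η12 * Real.sinh (R u1) * SSf s + Real.cosh (R u1) * CCf s)
        - (η23 * SSf s * Real.sinh r3 + CCf s * Real.cosh r3)) /
      (Real.sinh (L2 u1) *
        Real.sqrt ((η12 * Real.sinh (R u1) * SSf s + Real.cosh (R u1) * CCf s) ^ 2 - 1)))) := by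
    filter_upwards [Iio_mem_nhds hu2] with s hs
    obtain ⟨hSs, hCs⟩ := closed_form (hR s hs).1 (hR s hs).2
    rw [hθ1 u1 s, sinh_eq_sqrt (hL3 u1 s).1, (hL1 s).2, (hL3 u1 s).2, hSs, hCs]
  have hd1 := heq1.deriv_eq.trans hm1.deriv
  simp only [← hS2, ← hC2] at hd1
  rw [← (hL1 u2).2, ← (hL3 u1 u2).2] at hd1
  -- derivative of θ2 in first variable
  have hf2 : HasDerivAt (fun s => η31 * Real.sinh r3 * SSf s + Real.cosh r3 * CCf s)
      (η31 * Real.sinh r3 * (SSf u1 * CCf u1) + Real.cosh r3 * SSf u1 ^ 2) u1 :=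
    ((hasDerivAt_SSf hu1).const_mul _).add ((hasDerivAt_CCf hu1).const_mul _)
  have hg2 : HasDerivAt (fun s => η12 * SSf s * Real.sinh (R u2) + CCf s * Real.cosh (R u2))
      (η12 * (SSf u1 * CCf u1) * Real.sinh (R u2) + SSf u1 ^ 2 * Real.cosh (R u2)) u1 :=
    (((hasDerivAt_SSf hu1).const_mul η12).mul_const _).add ((hasDerivAt_CCf hu1).mul_const _)
  have hClt2 : 1 < η12 * SSf u1 * Real.sinh (R u2) + CCf u1 * Real.cosh (R u2) := by
    rw [← hS1, ← hC1, ← (hL3 u1 u2).2]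
    exact Real.one_lt_cosh.2 hl3.ne'
  have h2tri : |Real.cosh (L1 u2) * (η12 * SSf u1 * Real.sinh (R u2) + CCf u1 * Real.cosh (R u2))
      - (η31 * Real.sinh r3 * SSf u1 + Real.cosh r3 * CCf u1)|
      < Real.sinh (L1 u2) *
        Real.sqrt ((η12 * SSf u1 * Real.sinh (R u2) + CCf u1 * Real.cosh (R u2)) ^ 2 - 1) := by
    rw [← hS1, ← hC1, ← (hL2 u1).2, ← (hL3 u1 u2).2, ← sinh_eq_sqrt hl3]
    exact habs2
  have hm2 := master hf2 hg2 hsl1 (Real.sinh_sq (L1 u2)) hClt2 h2tri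
  have heq2 : (fun s => θ2 s u2) =ᶠ[nhds u1] (fun s => Real.arccos
      ((Real.cosh (L1 u2) * (η12 * SSf s * Real.sinh (R u2) + CCf s * Real.cosh (R u2))
        - (η31 * Real.sinh r3 * SSf s + Real.cosh r3 * CCf s)) /
      (Real.sinh (L1 u2) *
        Real.sqrt ((η12 * SSf s * Real.sinh (R u2) + CCf s * Real.cosh (R u2)) ^ 2 - 1)))) := by
    filter_upwards [Iio_mem_nhds hu1] with s hs
    obtain ⟨hSs, hCs⟩ := closed_form (hR s hs).1 (hR s hs).2
    rw [hθ2 s u2, sinh_eq_sqrt (hL3 s u2).1, (hL2 s).2, (hL3 s u2).2, hSs, hCs]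
  have hd2 := heq2.deriv_eq.trans hm2.deriv
  simp only [← hS1, ← hC1] at hd2
  rw [← (hL2 u1).2, ← (hL3 u1 u2).2] at hd2
  -- conclude
  have hT1 : deriv (fun s => θ1 u1 s) u2 =
      ((Real.cosh (L1 u2) * Real.cosh (L3 u1 u2) - Real.cosh (L2 u1)) * Real.cosh (R u1)
        + (Real.cosh (L2 u1) * Real.cosh (L3 u1 u2) - Real.cosh (L1 u2)) * Real.cosh (R u2)
        - Real.sinh (L3 u1 u2) ^ 2 * Real.cosh r3) /
      (Real.sqrt (1 + 2 * Real.cosh (L1 u2) * Real.cosh (L2 u1) * Real.cosh (L3 u1 u2)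
          - Real.cosh (L1 u2) ^ 2 - Real.cosh (L2 u1) ^ 2 - Real.cosh (L3 u1 u2) ^ 2)
        * Real.sinh (L3 u1 u2) ^ 2) := by
    rw [hd1, Real.sinh_sq (L3 u1 u2)]
    congr 1
    rw [(hL1 u2).2, (hL2 u1).2, (hL3 u1 u2).2]
    linear_combination
      (Real.cosh r3 - Real.cosh (R u2) ^ 2 * Real.cosh r3
        + Real.sinh (R u2) ^ 2 * Real.cosh r3
        - η23 * Real.sinh (R u2) * Real.cosh (R u2) * Real.sinh r3
        + η23 * Real.sinh (R u2) * Real.cosh (R u2) ^ 3 * Real.sinh r3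
        - η23 * Real.sinh (R u2) ^ 3 * Real.cosh (R u2) * Real.sinh r3) * Real.cosh_sq (R u1)
      + (- Real.sinh (R u1) ^ 2 * Real.cosh r3
        - η31 * Real.sinh (R u1) * Real.cosh (R u1) * Real.sinh r3
        + η23 * Real.sinh (R u2) * Real.cosh (R u2) * Real.sinh r3
        + η23 * Real.sinh (R u1) ^ 2 * Real.sinh (R u2) * Real.cosh (R u2) * Real.sinh r3
        - η12 * Real.sinh (R u1) * Real.cosh (R u1) * Real.sinh (R u2) * Real.cosh (R u2) * Real.cosh r3
        + η12 * η23 * Real.sinh (R u1) * Real.cosh (R u1) * Real.sinh (R u2) ^ 2 * Real.sinh r3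
        - η12 ^ 2 * Real.sinh (R u1) ^ 2 * Real.sinh (R u2) ^ 2 * Real.cosh r3) * Real.cosh_sq (R u2)
  have hT2 : deriv (fun s => θ2 s u2) u1 =
      ((Real.cosh (L1 u2) * Real.cosh (L3 u1 u2) - Real.cosh (L2 u1)) * Real.cosh (R u1)
        + (Real.cosh (L2 u1) * Real.cosh (L3 u1 u2) - Real.cosh (L1 u2)) * Real.cosh (R u2)
        - Real.sinh (L3 u1 u2) ^ 2 * Real.cosh r3) /
      (Real.sqrt (1 + 2 * Real.cosh (L1 u2) * Real.cosh (L2 u1) * Real.cosh (L3 u1 u2)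
          - Real.cosh (L1 u2) ^ 2 - Real.cosh (L2 u1) ^ 2 - Real.cosh (L3 u1 u2) ^ 2)
        * Real.sinh (L3 u1 u2) ^ 2) := by
    rw [hd2, Real.sinh_sq (L3 u1 u2),
      show 1 + 2 * Real.cosh (L2 u1) * Real.cosh (L1 u2) * Real.cosh (L3 u1 u2)
          - Real.cosh (L2 u1) ^ 2 - Real.cosh (L1 u2) ^ 2 - Real.cosh (L3 u1 u2) ^ 2
        = 1 + 2 * Real.cosh (L1 u2) * Real.cosh (L2 u1) * Real.cosh (L3 u1 u2)
          - Real.cosh (L1 u2) ^ 2 - Real.cosh (L2 u1) ^ 2 - Real.cosh (L3 u1 u2) ^ 2 from by ring]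
    congr 1
    rw [(hL1 u2).2, (hL2 u1).2, (hL3 u1 u2).2]
    linear_combination
      (Real.cosh r3 - Real.cosh (R u2) ^ 2 * Real.cosh r3
        + η31 * Real.sinh (R u1) * Real.cosh (R u1) * Real.cosh (R u2) ^ 2 * Real.sinh r3
        - η23 * Real.sinh (R u2) * Real.cosh (R u2) * Real.sinh r3
        - η12 * Real.sinh (R u1) * Real.cosh (R u1) * Real.sinh (R u2) * Real.cosh (R u2) * Real.cosh r3
        + η12 * η31 * Real.sinh (R u1) ^ 2 * Real.sinh (R u2) * Real.cosh (R u2) * Real.sinh r3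
        - η12 ^ 2 * Real.sinh (R u1) ^ 2 * Real.sinh (R u2) ^ 2 * Real.cosh r3) * Real.cosh_sq (R u1)
  exact ⟨hT1.trans hT2.symm, hT1⟩
end

section
/- For a Euclidean triangle with angles θ_i, θ_j, θ_k viewed as smooth functions of conformal factors (u_i, u_j, u_k) under any unified circle packing scheme (edge lengths l_{ij}² = 2η_{ij}e^{u_i+u_j} + ε_i e^{2u_i} + ε_j e^{2u_j}), the Jacobian matrix ∂(θ_i,θ_j,θ_k)/∂(u_i,u_j,u_k) equals −(1/(2A)) L Θ L^{−1} D, where A = (1/2) sin θ_i · l_j · l_k, L = diag(l_i, l_j, l_k), Θ is the symmetric matrix with −1 on the diagonal and cos θ_k, cos θ_j, cos θ_i in the appropriate off-diagonal positions, and D has zero diagonal and entries τ(a,b,c) = (1/2)(l_a² + ε_b γ_b² − ε_c γ_c²); in particular ∂θ_i/∂u_j = ∂θ_j/∂u_i. -/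
open Real

namespace Stmt16

noncomputable def X (η ε u : Fin 3 → ℝ) (c : Fin 3) : ℝ :=
  2 * η c * Real.exp (u (c + 1) + u (c + 2)) + ε (c + 1) * Real.exp (2 * u (c + 1))
    + ε (c + 2) * Real.exp (2 * u (c + 2))

noncomputable def Lf (η ε u : Fin 3 → ℝ) (c : Fin 3) : ℝ := Real.sqrt (X η ε u c)

def dl (i b : Fin 3) : ℝ := if i = b then 1 else 0

noncomputable def Xd (η ε u : Fin 3 → ℝ) (b c : Fin 3) : ℝ :=
  2 * η c * (Real.exp (u (c + 1) + u (c + 2)) * (dl (c + 1) b + dl (c + 2) b))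
    + ε (c + 1) * (Real.exp (2 * u (c + 1)) * (2 * dl (c + 1) b))
    + ε (c + 2) * (Real.exp (2 * u (c + 2)) * (2 * dl (c + 2) b))

lemma hasDerivAt_update (u : Fin 3 → ℝ) (b i : Fin 3) :
    HasDerivAt (fun s => Function.update u b s i) (dl i b) (u b) := by
  rcases eq_or_ne i b with h | h
  · subst h
    have he : (fun s => Function.update u i s i) = fun s => s := by
      funext s; simp
    rw [he]
    simpa [dl] using (hasDerivAt_id' (u i))
  · have he : (fun s => Function.update u b s i) = fun _ => u i := by
      funext s; simp [Function.update_apply, h]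
    rw [he]
    simpa [dl, h] using (hasDerivAt_const (u b) (u i))

lemma hasDerivAt_X (η ε u : Fin 3 → ℝ) (b c : Fin 3) :
    HasDerivAt (fun s => X η ε (Function.update u b s) c) (Xd η ε u b c) (u b) := by
  have h1 := hasDerivAt_update u b (c + 1)
  have h2 := hasDerivAt_update u b (c + 2)
  have e1 : HasDerivAt
      (fun s => Real.exp (Function.update u b s (c + 1) + Function.update u b s (c + 2)))
      (Real.exp (u (c + 1) + u (c + 2)) * (dl (c + 1) b + dl (c + 2) b)) (u b) := by
    have h := (h1.add h2).exp
    simp only [Pi.add_apply, Function.update_eq_self] at h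
    exact h
  have e2 : HasDerivAt (fun s => Real.exp (2 * Function.update u b s (c + 1)))
      (Real.exp (2 * u (c + 1)) * (2 * dl (c + 1) b)) (u b) := by
    have h := (h1.const_mul 2).exp
    rw [Function.update_eq_self] at h
    exact h
  have e3 : HasDerivAt (fun s => Real.exp (2 * Function.update u b s (c + 2)))
      (Real.exp (2 * u (c + 2)) * (2 * dl (c + 2) b)) (u b) := by
    have h := (h2.const_mul 2).exp
    rw [Function.update_eq_self] at h
    exact h
  exact ((e1.const_mul (2 * η c)).add (e2.const_mul (ε (c + 1)))).add (e3.const_mul (ε (c + 2)))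

lemma keyDeriv (η ε u : Fin 3 → ℝ) (b a : Fin 3)
    (hposX : ∀ (v : Fin 3 → ℝ) (c : Fin 3), 0 < X η ε v c)
    (hlo : -1 < (X η ε u (a + 1) + X η ε u (a + 2) - X η ε u a) /
      (2 * Lf η ε u (a + 1) * Lf η ε u (a + 2)))
    (hhi : (X η ε u (a + 1) + X η ε u (a + 2) - X η ε u a) /
      (2 * Lf η ε u (a + 1) * Lf η ε u (a + 2)) < 1) :
    HasDerivAt (fun s => Real.arccos
        ((X η ε (Function.update u b s) (a + 1) + X η ε (Function.update u b s) (a + 2)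
          - X η ε (Function.update u b s) a) /
        (2 * Lf η ε (Function.update u b s) (a + 1) * Lf η ε (Function.update u b s) (a + 2))))
      (-(1 / Real.sqrt (1 - ((X η ε u (a + 1) + X η ε u (a + 2) - X η ε u a) /
          (2 * Lf η ε u (a + 1) * Lf η ε u (a + 2))) ^ 2)) *
        (((Xd η ε u b (a + 1) + Xd η ε u b (a + 2) - Xd η ε u b a) *
            (2 * Lf η ε u (a + 1) * Lf η ε u (a + 2))
          - (X η ε u (a + 1) + X η ε u (a + 2) - X η ε u a) *
            (2 * (Xd η ε u b (a + 1) / (2 * Lf η ε u (a + 1))) * Lf η ε u (a + 2)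
              + 2 * Lf η ε u (a + 1) * (Xd η ε u b (a + 2) / (2 * Lf η ε u (a + 2)))))
          / (2 * Lf η ε u (a + 1) * Lf η ε u (a + 2)) ^ 2))
      (u b) := by
  have hLpos : ∀ c, 0 < Lf η ε u c := fun c => Real.sqrt_pos.2 (hposX u c)
  have hnum := ((hasDerivAt_X η ε u b (a + 1)).add (hasDerivAt_X η ε u b (a + 2))).sub
    (hasDerivAt_X η ε u b a)
  have hs2 : HasDerivAt (fun s => Lf η ε (Function.update u b s) (a + 1))
      (Xd η ε u b (a + 1) / (2 * Lf η ε u (a + 1))) (u b) := by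
    have h := (hasDerivAt_X η ε u b (a + 1)).sqrt (ne_of_gt (hposX _ _))
    rw [Function.update_eq_self] at h
    exact h
  have hs3 : HasDerivAt (fun s => Lf η ε (Function.update u b s) (a + 2))
      (Xd η ε u b (a + 2) / (2 * Lf η ε u (a + 2))) (u b) := by
    have h := (hasDerivAt_X η ε u b (a + 2)).sqrt (ne_of_gt (hposX _ _))
    rw [Function.update_eq_self] at h
    exact h
  have hden := (hs2.const_mul 2).mul hs3
  rw [Function.update_eq_self] at hden
  have hdenne : (2 : ℝ) * Lf η ε u (a + 1) * Lf η ε u (a + 2) ≠ 0 := by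
    have := hLpos (a + 1); have := hLpos (a + 2); positivity
  have hquot := hnum.div hden (by
    simp only [Pi.mul_apply, Function.update_eq_self]; exact hdenne)
  have hb1 : (X η ε (Function.update u b (u b)) (a + 1) + X η ε (Function.update u b (u b)) (a + 2)
      - X η ε (Function.update u b (u b)) a) /
      (2 * Lf η ε (Function.update u b (u b)) (a + 1)
        * Lf η ε (Function.update u b (u b)) (a + 2)) ≠ -1 := by
    rw [Function.update_eq_self]; exact hlo.ne'
  have hb2 : (X η ε (Function.update u b (u b)) (a + 1) + X η ε (Function.update u b (u b)) (a + 2)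
      - X η ε (Function.update u b (u b)) a) /
      (2 * Lf η ε (Function.update u b (u b)) (a + 1)
        * Lf η ε (Function.update u b (u b)) (a + 2)) ≠ 1 := by
    rw [Function.update_eq_self]; exact hhi.ne
  have harc := (Real.hasDerivAt_arccos hb1 hb2).comp (u b) hquot
  rw [Function.update_eq_self] at harc
  simp only [Pi.add_apply, Pi.sub_apply, Pi.mul_apply, Pi.div_apply, Function.comp_def,
    Function.update_eq_self] at harc
  exact harc

end Stmt16

set_option maxHeartbeats 1000000 in
open Stmt16 in
theorem stmt_16 (η ε : Fin 3 → ℝ) (hε : ∀ a, ε a ∈ ({-1, 0, 1} : Set ℝ))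
    (l : (Fin 3 → ℝ) → Fin 3 → ℝ)
    (hl : ∀ u a, l u a = Real.sqrt (2 * η a * Real.exp (u (a + 1) + u (a + 2))
      + ε (a + 1) * Real.exp (2 * u (a + 1)) + ε (a + 2) * Real.exp (2 * u (a + 2))))
    (hpos : ∀ (u : Fin 3 → ℝ) (a : Fin 3),
      0 < 2 * η a * Real.exp (u (a + 1) + u (a + 2))
        + ε (a + 1) * Real.exp (2 * u (a + 1)) + ε (a + 2) * Real.exp (2 * u (a + 2)))
    (htri : ∀ u a, l u a < l u (a + 1) + l u (a + 2))
    (θ : (Fin 3 → ℝ) → Fin 3 → ℝ)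
    (hθ : ∀ u a, θ u a = Real.arccos
      ((l u (a + 1) ^ 2 + l u (a + 2) ^ 2 - l u a ^ 2) / (2 * l u (a + 1) * l u (a + 2))))
    (u : Fin 3 → ℝ)
    (J : Matrix (Fin 3) (Fin 3) ℝ)
    (hJ : ∀ a b, J a b = deriv (fun s => θ (Function.update u b s) a) (u b))
    (A : ℝ) (hA : A = (1 / 2) * Real.sin (θ u 0) * l u 1 * l u 2)
    (Lm Θm Dm : Matrix (Fin 3) (Fin 3) ℝ)
    (hLm : Lm = Matrix.diagonal (fun a => l u a))
    (hΘm : ∀ a b, Θm a b = if a = b then -1 else Real.cos (θ u (-(a + b))))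
    (hDm : ∀ a b, Dm a b = if a = b then 0 else
      (1 / 2) * (l u a ^ 2 + ε b * Real.exp (u b) ^ 2
        - ε (-(a + b)) * Real.exp (u (-(a + b))) ^ 2)) :
    J = (-(1 / (2 * A))) • (Lm * Θm * Lm⁻¹ * Dm) ∧ J 0 1 = J 1 0 := by
  have hposX : ∀ (v : Fin 3 → ℝ) (c : Fin 3), 0 < X η ε v c := hpos
  have hlLf : ∀ (v : Fin 3 → ℝ) (c : Fin 3), l v c = Lf η ε v c := hl
  have hLpos : ∀ c, 0 < Lf η ε u c := fun c => Real.sqrt_pos.2 (hposX u c)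
  have hL2 : ∀ c, X η ε u c = Lf η ε u c ^ 2 := fun c => (Real.sq_sqrt (hposX u c).le).symm
  have htriL : ∀ a, Lf η ε u a < Lf η ε u (a + 1) + Lf η ε u (a + 2) := by
    intro a
    have h := htri u a
    rwa [hlLf, hlLf, hlLf] at h
  have hidx : ∀ a : Fin 3, a + 1 + 1 = a + 2 ∧ a + 1 + 2 = a ∧ a + 2 + 1 = a ∧ a + 2 + 2 = a + 1 := by
    decide
  have htriL1 : ∀ a, Lf η ε u (a + 1) < Lf η ε u (a + 2) + Lf η ε u a := by
    intro a
    have h := htriL (a + 1)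
    rwa [(hidx a).1, (hidx a).2.1] at h
  have htriL2 : ∀ a, Lf η ε u (a + 2) < Lf η ε u a + Lf η ε u (a + 1) := by
    intro a
    have h := htriL (a + 2)
    rwa [(hidx a).2.2.1, (hidx a).2.2.2] at h
  have hQlo : ∀ a, -1 < (X η ε u (a + 1) + X η ε u (a + 2) - X η ε u a) /
      (2 * Lf η ε u (a + 1) * Lf η ε u (a + 2)) := by
    intro a
    have hd : (0:ℝ) < 2 * Lf η ε u (a + 1) * Lf η ε u (a + 2) := by
      have := hLpos (a + 1); have := hLpos (a + 2); positivity
    rw [lt_div_iff₀ hd, hL2 a, hL2 (a + 1), hL2 (a + 2)]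
    have h1 := htriL a
    have p1 : 0 < Lf η ε u (a + 1) + Lf η ε u (a + 2) - Lf η ε u a := by linarith
    have p2 : 0 < Lf η ε u (a + 1) + Lf η ε u (a + 2) + Lf η ε u a := by
      have := hLpos a; have := hLpos (a + 1); have := hLpos (a + 2); linarith
    nlinarith [mul_pos p1 p2]
  have hQhi : ∀ a, (X η ε u (a + 1) + X η ε u (a + 2) - X η ε u a) /
      (2 * Lf η ε u (a + 1) * Lf η ε u (a + 2)) < 1 := by
    intro a
    have hd : (0:ℝ) < 2 * Lf η ε u (a + 1) * Lf η ε u (a + 2) := by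
      have := hLpos (a + 1); have := hLpos (a + 2); positivity
    rw [div_lt_one hd, hL2 a, hL2 (a + 1), hL2 (a + 2)]
    have h1 := htriL1 a
    have h2 := htriL2 a
    have p1 : 0 < Lf η ε u a - (Lf η ε u (a + 1) - Lf η ε u (a + 2)) := by linarith
    have p2 : 0 < Lf η ε u a + (Lf η ε u (a + 1) - Lf η ε u (a + 2)) := by linarith
    nlinarith [mul_pos p1 p2]
  -- the key derivative values
  have hJval : ∀ a b, J a b =
      -(1 / Real.sqrt (1 - ((X η ε u (a + 1) + X η ε u (a + 2) - X η ε u a) /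
          (2 * Lf η ε u (a + 1) * Lf η ε u (a + 2))) ^ 2)) *
        (((Xd η ε u b (a + 1) + Xd η ε u b (a + 2) - Xd η ε u b a) *
            (2 * Lf η ε u (a + 1) * Lf η ε u (a + 2))
          - (X η ε u (a + 1) + X η ε u (a + 2) - X η ε u a) *
            (2 * (Xd η ε u b (a + 1) / (2 * Lf η ε u (a + 1))) * Lf η ε u (a + 2)
              + 2 * Lf η ε u (a + 1) * (Xd η ε u b (a + 2) / (2 * Lf η ε u (a + 2)))))
          / (2 * Lf η ε u (a + 1) * Lf η ε u (a + 2)) ^ 2) := by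
    intro a b
    rw [hJ]
    have hfun : (fun s => θ (Function.update u b s) a) = (fun s => Real.arccos
        ((X η ε (Function.update u b s) (a + 1) + X η ε (Function.update u b s) (a + 2)
          - X η ε (Function.update u b s) a) /
        (2 * Lf η ε (Function.update u b s) (a + 1) * Lf η ε (Function.update u b s) (a + 2)))) := by
      funext s
      rw [hθ, hlLf, hlLf, hlLf]
      simp only [show ∀ c, Lf η ε (Function.update u b s) c ^ 2 = X η ε (Function.update u b s) c
        from fun c => Real.sq_sqrt (hposX _ c).le]
    rw [hfun]
    exact (keyDeriv η ε u b a hposX (hQlo a) (hQhi a)).deriv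
  have hexp2 : ∀ i : Fin 3, Real.exp (2 * u i) = Real.exp (u i) ^ 2 := by
    intro i; rw [two_mul, Real.exp_add, sq]
  have hXdval : ∀ b c, Xd η ε u b c =
      (X η ε u c - ε (c + 1) * Real.exp (u (c + 1)) ^ 2 - ε (c + 2) * Real.exp (u (c + 2)) ^ 2)
        * (dl (c + 1) b + dl (c + 2) b)
      + ε (c + 1) * Real.exp (u (c + 1)) ^ 2 * (2 * dl (c + 1) b)
      + ε (c + 2) * Real.exp (u (c + 2)) ^ 2 * (2 * dl (c + 2) b) := by
    intro b c
    simp only [Xd, X, hexp2]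
    ring
  have f01 : (0 : Fin 3) + 1 = 1 := by decide
  have f02 : (0 : Fin 3) + 2 = 2 := by decide
  have f11 : (1 : Fin 3) + 1 = 2 := by decide
  have f12 : (1 : Fin 3) + 2 = 0 := by decide
  have f21 : (2 : Fin 3) + 1 = 0 := by decide
  have f22 : (2 : Fin 3) + 2 = 1 := by decide
  have hfin : ∀ c : Fin 3, c = 0 ∨ c = 1 ∨ c = 2 := by decide
  have n0 : -(0 : Fin 3) = 0 := by decide
  have n1 : -(1 : Fin 3) = 2 := by decide
  have n2 : -(2 : Fin 3) = 1 := by decide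
  have g01 : -((0 : Fin 3) + 1) = 2 := by decide
  have g02 : -((0 : Fin 3) + 2) = 1 := by decide
  have g10 : -((1 : Fin 3) + 0) = 2 := by decide
  have g12 : -((1 : Fin 3) + 2) = 0 := by decide
  have g20 : -((2 : Fin 3) + 0) = 1 := by decide
  have g21 : -((2 : Fin 3) + 1) = 0 := by decide
  obtain ⟨Sv, hSv⟩ : ∃ s : ℝ, s = 2 * (Lf η ε u 0 ^ 2 * Lf η ε u 1 ^ 2
      + Lf η ε u 1 ^ 2 * Lf η ε u 2 ^ 2 + Lf η ε u 2 ^ 2 * Lf η ε u 0 ^ 2)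
      - Lf η ε u 0 ^ 4 - Lf η ε u 1 ^ 4 - Lf η ε u 2 ^ 4 := ⟨_, rfl⟩
  have hSpos : 0 < Sv := by
    have h0 := htriL 0; rw [f01, f02] at h0
    have h1 := htriL 1; rw [f11, f12] at h1
    have h2 := htriL 2; rw [f21, f22] at h2
    have l0 := hLpos 0; have l1 := hLpos 1; have l2 := hLpos 2
    have p1 : 0 < Lf η ε u 0 + Lf η ε u 1 + Lf η ε u 2 := by linarith
    have p2 : 0 < Lf η ε u 1 + Lf η ε u 2 - Lf η ε u 0 := by linarith
    have p3 : 0 < Lf η ε u 0 + Lf η ε u 2 - Lf η ε u 1 := by linarith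
    have p4 : 0 < Lf η ε u 0 + Lf η ε u 1 - Lf η ε u 2 := by linarith
    have hp := mul_pos (mul_pos (mul_pos p1 p2) p3) p4
    rw [hSv]
    nlinarith [hp]
  have hSva : ∀ a : Fin 3, Sv =
      2 * (Lf η ε u a ^ 2 * Lf η ε u (a + 1) ^ 2 + Lf η ε u (a + 1) ^ 2 * Lf η ε u (a + 2) ^ 2
        + Lf η ε u (a + 2) ^ 2 * Lf η ε u a ^ 2)
      - Lf η ε u a ^ 4 - Lf η ε u (a + 1) ^ 4 - Lf η ε u (a + 2) ^ 4 := by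
    intro a
    rw [hSv]
    rcases hfin a with rfl | rfl | rfl <;> simp only [f01, f02, f11, f12, f21, f22] <;> ring
  have hsqrt1 : ∀ a, 1 - ((X η ε u (a + 1) + X η ε u (a + 2) - X η ε u a) /
      (2 * Lf η ε u (a + 1) * Lf η ε u (a + 2))) ^ 2
      = Sv / (2 * Lf η ε u (a + 1) * Lf η ε u (a + 2)) ^ 2 := by
    intro a
    rw [hL2 a, hL2 (a + 1), hL2 (a + 2), hSva a]
    field_simp [(hLpos (a + 1)).ne', (hLpos (a + 2)).ne']
    ring
  have hsq : ∀ a, Real.sqrt (1 - ((X η ε u (a + 1) + X η ε u (a + 2) - X η ε u a) /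
      (2 * Lf η ε u (a + 1) * Lf η ε u (a + 2))) ^ 2)
      = Real.sqrt Sv / (2 * Lf η ε u (a + 1) * Lf η ε u (a + 2)) := by
    intro a
    rw [hsqrt1 a, Real.sqrt_div hSpos.le,
      Real.sqrt_sq (le_of_lt (mul_pos (mul_pos two_pos (hLpos _)) (hLpos _)))]
  have hθu : ∀ c, θ u c = Real.arccos ((X η ε u (c + 1) + X η ε u (c + 2) - X η ε u c) /
      (2 * Lf η ε u (c + 1) * Lf η ε u (c + 2))) := by
    intro c
    rw [hθ, hlLf, hlLf, hlLf]
    simp only [show ∀ d, Lf η ε u d ^ 2 = X η ε u d from fun d => (hL2 d).symm]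
  have hcos : ∀ c, Real.cos (θ u c) = (X η ε u (c + 1) + X η ε u (c + 2) - X η ε u c) /
      (2 * Lf η ε u (c + 1) * Lf η ε u (c + 2)) := by
    intro c; rw [hθu c, Real.cos_arccos (hQlo c).le (hQhi c).le]
  have hA' : A = Real.sqrt Sv / 4 := by
    rw [hA, hθu 0, Real.sin_arccos, hsq 0, hlLf, hlLf, f01, f02]
    field_simp [(hLpos 1).ne', (hLpos 2).ne']
    ring
  have hLm2 : Lm = Matrix.diagonal (fun c => Lf η ε u c) := by
    rw [hLm, show (fun a => l u a) = fun c => Lf η ε u c from funext fun c => hlLf u c]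
  have hLinv : Lm⁻¹ = Matrix.diagonal (fun c => (Lf η ε u c)⁻¹) := by
    apply Matrix.inv_eq_right_inv
    rw [hLm2, Matrix.diagonal_mul_diagonal]
    have hone : (fun i => Lf η ε u i * (Lf η ε u i)⁻¹) = fun _ => (1 : ℝ) := by
      funext i; exact mul_inv_cancel₀ (hLpos i).ne'
    rw [hone, Matrix.diagonal_one]
  have hJval2 : ∀ a b, J a b =
      -(1 / (Real.sqrt Sv / (2 * Lf η ε u (a + 1) * Lf η ε u (a + 2)))) *
        (((Xd η ε u b (a + 1) + Xd η ε u b (a + 2) - Xd η ε u b a) *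
            (2 * Lf η ε u (a + 1) * Lf η ε u (a + 2))
          - (X η ε u (a + 1) + X η ε u (a + 2) - X η ε u a) *
            (2 * (Xd η ε u b (a + 1) / (2 * Lf η ε u (a + 1))) * Lf η ε u (a + 2)
              + 2 * Lf η ε u (a + 1) * (Xd η ε u b (a + 2) / (2 * Lf η ε u (a + 2)))))
          / (2 * Lf η ε u (a + 1) * Lf η ε u (a + 2)) ^ 2) := by
    intro a b
    rw [hJval a b, hsq a]
  have hRne : Real.sqrt Sv ≠ 0 := (Real.sqrt_pos.2 hSpos).ne'
  have hLn0 := (hLpos 0).ne'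
  have hLn1 := (hLpos 1).ne'
  have hLn2 := (hLpos 2).ne'
  have hM : ∀ a b, (Lm * Θm * Lm⁻¹ * Dm) a b =
      Lf η ε u a * (Θm a 0 * ((Lf η ε u 0)⁻¹ * Dm 0 b) + Θm a 1 * ((Lf η ε u 1)⁻¹ * Dm 1 b)
        + Θm a 2 * ((Lf η ε u 2)⁻¹ * Dm 2 b)) := by
    intro a b
    rw [mul_assoc, mul_assoc, hLinv, hLm2, Matrix.diagonal_mul, Matrix.mul_apply,
      Fin.sum_univ_three, Matrix.diagonal_mul, Matrix.diagonal_mul, Matrix.diagonal_mul]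
  constructor
  · ext a b
    rw [hJval2, Matrix.smul_apply, smul_eq_mul, hM, hA']
    rcases hfin a with rfl | rfl | rfl <;> rcases hfin b with rfl | rfl | rfl <;>
    · simp only [hΘm, hDm, hcos, hXdval, hL2, dl, f01, f02, f11, f12, f21, f22,
        g01, g02, g10, g12, g20, g21, n0, n1, n2, hlLf, Fin.reduceEq, reduceIte]
      field_simp [hRne, hLn0, hLn1, hLn2]
      ring
  · rw [hJval2 0 1, hJval2 1 0]
    simp only [hXdval, hL2, dl, f01, f02, f11, f12, f21, f22, Fin.reduceEq, reduceIte]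
    field_simp [hRne, hLn0, hLn1, hLn2]
    ring
end
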